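/- Every pair (k₁, k₂) ∈ P⊥ with (k₁, k₂) ≠ (0, 0), where P⊥ is the dual net of the generating matrices C₁, C₂ of the folded Hammersley point set, satisfies μ₂(k₁) + μ₂(k₂) > 2m − 3; that is, the minimum Dick weight of the folded Hammersley point set P_{m,τ_n} in base b satisfies ρ₂(P_{m,τ_n}) > 2m − 3. -/

import Mathlib

/-- Generating matrix `C₁` of the folded Hammersley point set: rows are 0-indexed, row
`i` being row `l = i + 1` of the paper.  For `1 ≤ l ≤ m - 1` the row has entry `b - 1`
in column `1` and entry `1` in column `l + 1` (1-indexed); for `m ≤ l ≤ n` it has entry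
`b - 1` in column `1`; all other entries are zero. -/
def fhC1 (b m n : ℕ) : Matrix (Fin n) (Fin m) (ZMod b) := fun i j =>
  if (j : ℕ) = 0 then ((b - 1 : ℕ) : ZMod b)
  else if (i : ℕ) + 2 ≤ m ∧ (j : ℕ) = (i : ℕ) + 1 then 1 else 0

/-- Generating matrix `C₂` of the folded Hammersley point set: rows are 0-indexed, row
`i` being row `l = i + 1` of the paper.  For `1 ≤ l ≤ m - 1` the row has entry `1` in
column `m - l` and entry `b - 1` in column `m` (1-indexed); for `m ≤ l ≤ n` it has entry
`b - 1` in column `m`; all other entries are zero. -/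
def fhC2 (b m n : ℕ) : Matrix (Fin n) (Fin m) (ZMod b) := fun i j =>
  if (j : ℕ) + 1 = m then ((b - 1 : ℕ) : ZMod b)
  else if (i : ℕ) + 2 ≤ m ∧ (j : ℕ) + 2 + (i : ℕ) = m then 1 else 0

/-- The vector of the first `n` base-`b` digits of `k ∈ ℕ` (least significant first),
viewed in `ZMod b`. -/
def digitVec (b n k : ℕ) : Fin n → ZMod b := fun i => (((k / b ^ (i : ℕ)) % b : ℕ) : ZMod b)

/-- The Dick weight `μ₂(k)`: the sum of the two largest indices `i ≥ 1` such that the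
`i`-th base-`b` digit of `k` is nonzero if `k` has at least two nonzero digits, the
largest such index if `k` has exactly one nonzero digit, and `μ₂(0) = 0`. -/
def mu2 (b k : ℕ) : ℕ :=
  if k = 0 then 0
  else
    let a1 := Nat.log b k + 1
    let r := k % b ^ (a1 - 1)
    if r = 0 then a1 else a1 + (Nat.log b r + 1)


/-- The `i`-th base-`b` digit of `k`. -/
def dg (b k i : ℕ) : ℕ := k / b ^ i % b

lemma dg_lt {b : ℕ} (hb : 2 ≤ b) (k i : ℕ) : dg b k i < b :=
  Nat.mod_lt _ (by omega)

lemma dg_cast_eq_zero {b : ℕ} (hb : 2 ≤ b) (k i : ℕ) :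
    ((dg b k i : ℕ) : ZMod b) = 0 ↔ dg b k i = 0 := by
  rw [ZMod.natCast_eq_zero_iff]
  constructor
  · intro h; exact Nat.eq_zero_of_dvd_of_lt h (dg_lt hb k i)
  · rintro h; simp [h]

lemma dg_log_ne_zero {b : ℕ} (hb : 2 ≤ b) {k : ℕ} (hk : k ≠ 0) :
    dg b k (Nat.log b k) ≠ 0 := by
  have h1 : b ^ Nat.log b k ≤ k := Nat.pow_log_le_self b hk
  have h2 : k < b ^ (Nat.log b k + 1) := Nat.lt_pow_succ_log_self (by omega) k
  have h3 : 1 ≤ k / b ^ Nat.log b k := (Nat.one_le_div_iff (by positivity)).mpr h1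
  have h4 : k / b ^ Nat.log b k < b := by
    rw [Nat.div_lt_iff_lt_mul (by positivity)]
    calc k < b ^ (Nat.log b k + 1) := h2
    _ = b * b ^ Nat.log b k := by ring
  unfold dg
  rw [Nat.mod_eq_of_lt h4]
  omega

lemma dg_le_log {b : ℕ} (hb : 2 ≤ b) {k i : ℕ} (h : dg b k i ≠ 0) :
    k ≠ 0 ∧ i ≤ Nat.log b k := by
  have hk : k ≠ 0 := by rintro rfl; exact h (by simp [dg])
  refine ⟨hk, ?_⟩
  by_contra hlt
  push_neg at hlt
  have h2 : k < b ^ (Nat.log b k + 1) := Nat.lt_pow_succ_log_self (by omega) k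
  have : k < b ^ i := lt_of_lt_of_le h2 (Nat.pow_le_pow_right (by omega) (by omega))
  exact h (by unfold dg; rw [Nat.div_eq_of_lt this]; simp)

lemma mu2_zero (b : ℕ) : mu2 b 0 = 0 := by simp [mu2]

lemma mu2_ge {b : ℕ} (hb : 2 ≤ b) {k p : ℕ} (hp : dg b k p ≠ 0) :
    p + 1 ≤ mu2 b k := by
  obtain ⟨hk, hlog⟩ := dg_le_log hb hp
  simp only [mu2, if_neg hk]
  split_ifs <;> omega

lemma mu2_ge2 {b : ℕ} (hb : 2 ≤ b) {k p q : ℕ} (hpq : p < q)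
    (hp : dg b k p ≠ 0) (hq : dg b k q ≠ 0) : p + q + 2 ≤ mu2 b k := by
  obtain ⟨hk, hlogq⟩ := dg_le_log hb hq
  have hdig : dg b (k % b ^ Nat.log b k) p = dg b k p := by
    unfold dg
    rw [← Nat.mod_mul_right_div_self, ← Nat.mod_mul_right_div_self k]
    congr 1
    have : b ^ p * b = b ^ (p + 1) := by ring
    rw [this]
    exact Nat.mod_mod_of_dvd k (pow_dvd_pow b (by omega))
  have hr : k % b ^ Nat.log b k ≠ 0 := by
    intro h; rw [h] at hdig; exact hp (by rw [← hdig]; simp [dg])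
  have hlr : p ≤ Nat.log b (k % b ^ Nat.log b k) := by
    have := dg_le_log hb (k := k % b ^ Nat.log b k) (i := p) (by rw [hdig]; exact hp)
    exact this.2
  simp only [mu2, if_neg hk, Nat.add_sub_cancel, if_neg hr]
  omega

lemma exists_two_dg {b n k : ℕ} (hb : 2 ≤ b) (hk : k ≠ 0) (hkn : k < b ^ n)
    (hs : ∑ i ∈ Finset.range n, ((dg b k i : ℕ) : ZMod b) = 0) :
    ∃ p q, p < q ∧ dg b k p ≠ 0 ∧ dg b k q ≠ 0 := by
  set L := Nat.log b k with hL
  have hLn : L < n := Nat.log_lt_of_lt_pow hk hkn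
  have hdL : dg b k L ≠ 0 := dg_log_ne_zero hb hk
  by_contra h
  push_neg at h
  have hall : ∀ i, i ≠ L → dg b k i = 0 := by
    intro i hi
    rcases Nat.lt_or_ge i L with h1 | h1
    · by_contra hne
      exact hdL (h i L h1 hne)
    · have h1' : L < i := by omega
      by_contra hne
      exact hne (h L i h1' hdL)
  have : ∑ i ∈ Finset.range n, ((dg b k i : ℕ) : ZMod b) = ((dg b k L : ℕ) : ZMod b) := by
    apply Finset.sum_eq_single_of_mem L (Finset.mem_range.mpr hLn)
    intro i _ hi
    rw [hall i hi]; simp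
  rw [this] at hs
  exact hdL ((dg_cast_eq_zero hb k L).mp hs)

lemma sum_ind_col {b n : ℕ} (t : ℕ) (ht : t < n) (f : ℕ → ZMod b) (g : Fin n → ZMod b)
    (hg : ∀ i : Fin n, g i = if (i : ℕ) = t then 1 else 0) :
    ∑ i : Fin n, g i * f (i : ℕ) = f t := by
  rw [Finset.sum_eq_single_of_mem (⟨t, ht⟩ : Fin n) (Finset.mem_univ _)]
  · rw [hg]; simp
  · intro i _ hi
    rw [hg, if_neg (by simpa [Fin.ext_iff] using hi)]
    simp

lemma sum_const_col {b n : ℕ} (hb : 2 ≤ b) (f : ℕ → ZMod b) (g : Fin n → ZMod b)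
    (hg : ∀ i : Fin n, g i = ((b - 1 : ℕ) : ZMod b)) :
    ∑ i : Fin n, g i * f (i : ℕ) = -∑ i ∈ Finset.range n, f i := by
  have hb1 : ((b - 1 : ℕ) : ZMod b) = -1 := by
    rw [Nat.cast_sub (by omega), Nat.cast_one, ZMod.natCast_self]
    ring
  calc ∑ i : Fin n, g i * f (i : ℕ) = ∑ i : Fin n, -f (i : ℕ) := by
        apply Finset.sum_congr rfl
        intro i _
        rw [hg, hb1]; ring
    _ = -∑ i : Fin n, f (i : ℕ) := by rw [Finset.sum_neg_distrib]
    _ = -∑ i ∈ Finset.range n, f i := by rw [Fin.sum_univ_eq_sum_range]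

/-- The case where `k1 = 0`: k2 has all digits up to `m-2` zero and digit sum zero. -/
lemma fh_zero {b m n k2 : ℕ} (hb : 2 ≤ b) (hm : 2 ≤ m) (hk2n : k2 < b ^ n)
    (h2 : k2 ≠ 0)
    (hY : ∀ j, j ≤ m - 2 → dg b k2 j = 0)
    (hs : ∑ i ∈ Finset.range n, ((dg b k2 i : ℕ) : ZMod b) = 0) :
    2 * m - 2 ≤ mu2 b k2 := by
  obtain ⟨p, q, hpq, hp, hq⟩ := exists_two_dg hb h2 hk2n hs
  have hpm : m - 1 ≤ p := by
    by_contra h; push_neg at h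
    exact hp (hY p (by omega))
  have := mu2_ge2 hb hpq hp hq
  omega

/-- Main half-lemma: both nonzero, and the top digit of `k2` is at index `≤ m-2`. -/
lemma fh_half {b m n k1 k2 : ℕ} (hb : 2 ≤ b) (hm : 2 ≤ m)
    (hk2n : k2 < b ^ n) (h1 : k1 ≠ 0) (h2 : k2 ≠ 0)
    (R2 : ∑ i ∈ Finset.range n, ((dg b k2 i : ℕ) : ZMod b) = ((dg b k1 (m - 2) : ℕ) : ZMod b))
    (R3 : ∀ t, t + 3 ≤ m → ((dg b k1 t : ℕ) : ZMod b) = -((dg b k2 (m - 3 - t) : ℕ) : ZMod b))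
    (R3' : ∀ t, t + 3 ≤ m → ((dg b k2 t : ℕ) : ZMod b) = -((dg b k1 (m - 3 - t) : ℕ) : ZMod b))
    (hc : Nat.log b k2 ≤ m - 2) :
    2 * m - 2 ≤ mu2 b k1 + mu2 b k2 := by
  set c := Nat.log b k2 with hcdef
  have hYc : dg b k2 c ≠ 0 := dg_log_ne_zero hb h2
  rcases Nat.lt_or_ge (c + 3) (m + 1) with hc3 | hc3
  · -- c + 3 ≤ m
    have hc3' : c + 3 ≤ m := by omega
    have hX : dg b k1 (m - 3 - c) ≠ 0 := by
      intro h
      have := R3' c hc3'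
      rw [h] at this
      simp at this
      exact hYc ((dg_cast_eq_zero hb k2 c).mp this)
    by_cases hs : ∑ i ∈ Finset.range n, ((dg b k2 i : ℕ) : ZMod b) = 0
    · -- digit sum of k2 is zero: k2 has two nonzero digits
      obtain ⟨p, q, hpq, hp, hq⟩ := exists_two_dg hb h2 hk2n hs
      have hql : q ≤ c := (dg_le_log hb hq).2
      have hXp : dg b k1 (m - 3 - p) ≠ 0 := by
        intro h
        have := R3' p (by omega)
        rw [h] at this; simp at this
        exact hp ((dg_cast_eq_zero hb k2 p).mp this)
      have hXq : dg b k1 (m - 3 - q) ≠ 0 := by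
        intro h
        have := R3' q (by omega)
        rw [h] at this; simp at this
        exact hq ((dg_cast_eq_zero hb k2 q).mp this)
      have h1' := mu2_ge2 hb (show m - 3 - q < m - 3 - p by omega) hXq hXp
      have h2' := mu2_ge2 hb hpq hp hq
      omega
    · -- digit sum of k2 nonzero, so digit of k1 at m-2 is nonzero
      have hX2 : dg b k1 (m - 2) ≠ 0 := by
        intro h
        rw [R2, h] at hs
        simp at hs
      have h1' := mu2_ge2 hb (show m - 3 - c < m - 2 by omega) hX hX2
      have h2' := mu2_ge hb hYc
      omega
  · -- c = m - 2
    have hc2 : c = m - 2 := by omega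
    have h2' := mu2_ge hb hYc
    set a := Nat.log b k1 with hadef
    have hXa : dg b k1 a ≠ 0 := dg_log_ne_zero hb h1
    rcases Nat.lt_or_ge a (m - 2) with ha | ha
    · -- a ≤ m - 3
      have ha3 : a + 3 ≤ m := by omega
      have hYa : dg b k2 (m - 3 - a) ≠ 0 := by
        intro h
        have := R3 a ha3
        rw [h] at this; simp at this
        exact hXa ((dg_cast_eq_zero hb k1 a).mp this)
      have h3' := mu2_ge2 hb (show m - 3 - a < m - 2 by omega) hYa (by rw [← hc2]; exact hYc)
      have h4' := mu2_ge hb hXa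
      omega
    · have h4' := mu2_ge hb hXa
      omega

lemma fh_key {b m n k1 k2 : ℕ} (hb : 2 ≤ b) (hm : 2 ≤ m)
    (hk1n : k1 < b ^ n) (hk2n : k2 < b ^ n)
    (R1 : ∑ i ∈ Finset.range n, ((dg b k1 i : ℕ) : ZMod b) = ((dg b k2 (m - 2) : ℕ) : ZMod b))
    (R2 : ∑ i ∈ Finset.range n, ((dg b k2 i : ℕ) : ZMod b) = ((dg b k1 (m - 2) : ℕ) : ZMod b))
    (R3 : ∀ t, t + 3 ≤ m → ((dg b k1 t : ℕ) : ZMod b) = -((dg b k2 (m - 3 - t) : ℕ) : ZMod b))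
    (hne : ¬(k1 = 0 ∧ k2 = 0)) :
    2 * m - 2 ≤ mu2 b k1 + mu2 b k2 := by
  have R3' : ∀ t, t + 3 ≤ m → ((dg b k2 t : ℕ) : ZMod b) = -((dg b k1 (m - 3 - t) : ℕ) : ZMod b) := by
    intro t ht
    have h := R3 (m - 3 - t) (by omega)
    have : m - 3 - (m - 3 - t) = t := by omega
    rw [this] at h
    rw [h]; ring
  have dg0 : ∀ i, dg b 0 i = 0 := fun i => by simp [dg]
  by_cases h1 : k1 = 0
  · subst h1
    have h2 : k2 ≠ 0 := fun h => hne ⟨rfl, h⟩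
    have hY : ∀ j, j ≤ m - 2 → dg b k2 j = 0 := by
      intro j hj
      rcases Nat.lt_or_ge j (m - 2) with hj2 | hj2
      · have h := R3' j (by omega)
        rw [dg0, Nat.cast_zero, neg_zero] at h
        exact (dg_cast_eq_zero hb k2 j).mp h
      · have hj3 : j = m - 2 := by omega
        subst hj3
        have : ∑ i ∈ Finset.range n, ((dg b 0 i : ℕ) : ZMod b) = 0 := by
          apply Finset.sum_eq_zero; intro i _; rw [dg0]; simp
        rw [this] at R1
        exact (dg_cast_eq_zero hb k2 (m - 2)).mp R1.symm
    have hs : ∑ i ∈ Finset.range n, ((dg b k2 i : ℕ) : ZMod b) = 0 := by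
      rw [R2, dg0]; simp
    have := fh_zero hb hm hk2n h2 hY hs
    have : mu2 b 0 = 0 := mu2_zero b
    omega
  · by_cases h2 : k2 = 0
    · subst h2
      have hX : ∀ j, j ≤ m - 2 → dg b k1 j = 0 := by
        intro j hj
        rcases Nat.lt_or_ge j (m - 2) with hj2 | hj2
        · have h := R3 j (by omega)
          rw [dg0, Nat.cast_zero, neg_zero] at h
          exact (dg_cast_eq_zero hb k1 j).mp h
        · have hj3 : j = m - 2 := by omega
          subst hj3
          have : ∑ i ∈ Finset.range n, ((dg b 0 i : ℕ) : ZMod b) = 0 := by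
            apply Finset.sum_eq_zero; intro i _; rw [dg0]; simp
          rw [this] at R2
          exact (dg_cast_eq_zero hb k1 (m - 2)).mp R2.symm
      have hs : ∑ i ∈ Finset.range n, ((dg b k1 i : ℕ) : ZMod b) = 0 := by
        rw [R1, dg0]; simp
      have := fh_zero hb hm hk1n h1 hX hs
      have : mu2 b 0 = 0 := mu2_zero b
      omega
    · rcases Nat.lt_or_ge (m - 2) (Nat.log b k2) with hc | hc
      · rcases Nat.lt_or_ge (m - 2) (Nat.log b k1) with ha | ha
        · -- both logs ≥ m - 1
          have e1 := mu2_ge hb (dg_log_ne_zero hb h1)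
          have e2 := mu2_ge hb (dg_log_ne_zero hb h2)
          omega
        · have := fh_half hb hm hk1n h2 h1 R1 R3' R3 ha
          omega
      · exact fh_half hb hm hk2n h1 h2 R2 R3 R3' hc


section cols
variable {b m n : ℕ}

lemma fhC1_col0 (i : Fin n) (j : Fin m) (hj : (j : ℕ) = 0) :
    fhC1 b m n i j = ((b - 1 : ℕ) : ZMod b) := by
  simp [fhC1, hj]

lemma fhC2_col0 (hm : 2 ≤ m) (i : Fin n) (j : Fin m) (hj : (j : ℕ) = 0) :
    fhC2 b m n i j = if (i : ℕ) = m - 2 then 1 else 0 := by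
  simp only [fhC2, hj]
  rw [if_neg (show ¬(0 + 1 = m) by omega)]
  by_cases h : (i : ℕ) = m - 2
  · rw [if_pos ⟨by omega, by omega⟩, if_pos h]
  · rw [if_neg (fun hc => h (by omega)), if_neg h]

lemma fhC1_colLast (hm : 2 ≤ m) (i : Fin n) (j : Fin m) (hj : (j : ℕ) = m - 1) :
    fhC1 b m n i j = if (i : ℕ) = m - 2 then 1 else 0 := by
  simp only [fhC1, hj]
  rw [if_neg (show ¬(m - 1 = 0) by omega)]
  by_cases h : (i : ℕ) = m - 2
  · rw [if_pos ⟨by omega, by omega⟩, if_pos h]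
  · rw [if_neg (fun hc => h (by omega)), if_neg h]

lemma fhC2_colLast (hm : 2 ≤ m) (i : Fin n) (j : Fin m) (hj : (j : ℕ) = m - 1) :
    fhC2 b m n i j = ((b - 1 : ℕ) : ZMod b) := by
  simp only [fhC2, hj]
  rw [if_pos (show m - 1 + 1 = m by omega)]

lemma fhC1_colMid {t : ℕ} (ht : t + 3 ≤ m) (i : Fin n) (j : Fin m) (hj : (j : ℕ) = t + 1) :
    fhC1 b m n i j = if (i : ℕ) = t then 1 else 0 := by
  simp only [fhC1, hj]
  rw [if_neg (show ¬(t + 1 = 0) by omega)]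
  by_cases h : (i : ℕ) = t
  · rw [if_pos ⟨by omega, by omega⟩, if_pos h]
  · rw [if_neg (fun hc => h (by omega)), if_neg h]

lemma fhC2_colMid {t : ℕ} (ht : t + 3 ≤ m) (i : Fin n) (j : Fin m) (hj : (j : ℕ) = t + 1) :
    fhC2 b m n i j = if (i : ℕ) = m - 3 - t then 1 else 0 := by
  simp only [fhC2, hj]
  rw [if_neg (show ¬(t + 1 + 1 = m) by omega)]
  by_cases h : (i : ℕ) = m - 3 - t
  · rw [if_pos ⟨by omega, by omega⟩, if_pos h]
  · rw [if_neg (fun hc => h (by omega)), if_neg h]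

end cols

/-- Every `(k₁, k₂) ≠ (0, 0)` in the dual net of the generating
matrices `C₁, C₂` of the folded Hammersley point set satisfies
`μ₂(k₁) + μ₂(k₂) > 2m - 3`; that is, the minimum Dick weight of the folded Hammersley
point set `P_{m,τ_n}` in base `b` satisfies `ρ₂(P_{m,τ_n}) > 2m - 3`. -/
theorem folded_hammersley_min_dick_weight (b m n : ℕ) (hb : 2 ≤ b) (hm : 1 ≤ m)
    (hmn : 2 * m ≤ n) (k1 k2 : ℕ) (hk1 : k1 < b ^ n) (hk2 : k2 < b ^ n)
    (hdual : Matrix.mulVec (fhC1 b m n).transpose (digitVec b n k1) +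
        Matrix.mulVec (fhC2 b m n).transpose (digitVec b n k2) = 0)
    (hne : ¬(k1 = 0 ∧ k2 = 0)) :
    2 * m - 3 < mu2 b k1 + mu2 b k2 := by
  -- trivial case m = 1
  rcases Nat.lt_or_ge m 2 with hm1 | hm2
  · have hm1' : m = 1 := by omega
    by_cases h1 : k1 = 0
    · have h2 : k2 ≠ 0 := fun h => hne ⟨h1, h⟩
      have := mu2_ge hb (dg_log_ne_zero hb h2)
      omega
    · have := mu2_ge hb (dg_log_ne_zero hb h1)
      omega
  · -- extract the row equations
    have hrow : ∀ j : Fin m,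
        (∑ i : Fin n, fhC1 b m n i j * ((dg b k1 (i : ℕ) : ℕ) : ZMod b)) +
        (∑ i : Fin n, fhC2 b m n i j * ((dg b k2 (i : ℕ) : ℕ) : ZMod b)) = 0 := by
      intro j
      have h := congrFun hdual j
      simpa [Matrix.mulVec, dotProduct, Matrix.transpose_apply, digitVec, dg,
        Pi.add_apply, Pi.zero_apply] using h
    have hm2n : m - 2 < n := by omega
    set X : ℕ → ZMod b := fun i => ((dg b k1 i : ℕ) : ZMod b) with hX
    set Y : ℕ → ZMod b := fun i => ((dg b k2 i : ℕ) : ZMod b) with hY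
    -- R1
    have R1 : ∑ i ∈ Finset.range n, X i = Y (m - 2) := by
      have h := hrow ⟨0, by omega⟩
      have e1 : (∑ i : Fin n, fhC1 b m n i ⟨0, by omega⟩ * X (i : ℕ))
          = -∑ i ∈ Finset.range n, X i :=
        sum_const_col hb X (fun i => fhC1 b m n i ⟨0, by omega⟩)
          (fun i => fhC1_col0 i ⟨0, by omega⟩ rfl)
      have e2 : (∑ i : Fin n, fhC2 b m n i ⟨0, by omega⟩ * Y (i : ℕ)) = Y (m - 2) :=
        sum_ind_col (m - 2) hm2n Y (fun i => fhC2 b m n i ⟨0, by omega⟩)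
          (fun i => fhC2_col0 hm2 i ⟨0, by omega⟩ rfl)
      rw [e1, e2] at h
      linear_combination -h
    -- R2
    have R2 : ∑ i ∈ Finset.range n, Y i = X (m - 2) := by
      have h := hrow ⟨m - 1, by omega⟩
      have e1 : (∑ i : Fin n, fhC1 b m n i ⟨m - 1, by omega⟩ * X (i : ℕ)) = X (m - 2) :=
        sum_ind_col (m - 2) hm2n X (fun i => fhC1 b m n i ⟨m - 1, by omega⟩)
          (fun i => fhC1_colLast hm2 i ⟨m - 1, by omega⟩ rfl)
      have e2 : (∑ i : Fin n, fhC2 b m n i ⟨m - 1, by omega⟩ * Y (i : ℕ))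
          = -∑ i ∈ Finset.range n, Y i :=
        sum_const_col hb Y (fun i => fhC2 b m n i ⟨m - 1, by omega⟩)
          (fun i => fhC2_colLast hm2 i ⟨m - 1, by omega⟩ rfl)
      rw [e1, e2] at h
      linear_combination -h
    -- R3
    have R3 : ∀ t, t + 3 ≤ m → X t = -Y (m - 3 - t) := by
      intro t ht
      have htm : t + 1 < m := by omega
      have htn : t < n := by omega
      have htn2 : m - 3 - t < n := by omega
      have h := hrow ⟨t + 1, htm⟩
      have e1 : (∑ i : Fin n, fhC1 b m n i ⟨t + 1, htm⟩ * X (i : ℕ)) = X t :=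
        sum_ind_col t htn X (fun i => fhC1 b m n i ⟨t + 1, htm⟩)
          (fun i => fhC1_colMid ht i ⟨t + 1, htm⟩ rfl)
      have e2 : (∑ i : Fin n, fhC2 b m n i ⟨t + 1, htm⟩ * Y (i : ℕ)) = Y (m - 3 - t) :=
        sum_ind_col (m - 3 - t) htn2 Y (fun i => fhC2 b m n i ⟨t + 1, htm⟩)
          (fun i => fhC2_colMid ht i ⟨t + 1, htm⟩ rfl)
      rw [e1, e2] at h
      linear_combination h
    have := fh_key hb hm2 hk1 hk2 R1 R2 R3 hne
    omega
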